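/- Let 0 < b < a be real numbers. Then G(a, b) = G((a+b)/2, √(ab)), where G(a,b) denotes the integral from 0 to π/2 of 1/√(a² cos²θ + b² sin²θ) dθ. (Gauss's invariance of the elliptic integral under the arithmetic-geometric mean step.) -/

import Mathlib

open Real MeasureTheory Set

lemma pos_den (p q : ℝ) (hp : 0 < p) (hq : 0 < q) (θ : ℝ) :
    0 < p ^ 2 * Real.cos θ ^ 2 + q ^ 2 * Real.sin θ ^ 2 := by
  rcases le_or_gt (Real.cos θ ^ 2) (1/2) with h | h
  · have hs : (1:ℝ)/2 ≤ Real.sin θ ^ 2 := by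
      have := Real.sin_sq_add_cos_sq θ; linarith
    nlinarith [sq_nonneg (Real.cos θ), mul_pos hp hp, mul_pos hq hq]
  · nlinarith [sq_nonneg (Real.sin θ), mul_pos hp hp, mul_pos hq hq]

lemma cont_den (p q : ℝ) (hp : 0 < p) (hq : 0 < q) :
    Continuous fun θ : ℝ => 1 / Real.sqrt (p ^ 2 * Real.cos θ ^ 2 + q ^ 2 * Real.sin θ ^ 2) := by
  apply Continuous.div continuous_const
  · exact (((continuous_const.mul (Real.continuous_cos.pow 2)).add
      (continuous_const.mul (Real.continuous_sin.pow 2)))).sqrt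
  · intro θ
    exact ne_of_gt (Real.sqrt_pos.2 (pos_den p q hp hq θ))

lemma tan_image (q : ℝ) (hq : 0 < q) :
    (fun θ => q * Real.tan θ) '' Ioo 0 (π/2) = Ioi 0 := by
  ext y
  simp only [mem_image, mem_Ioo, mem_Ioi]
  constructor
  · rintro ⟨θ, ⟨h1, h2⟩, rfl⟩
    exact mul_pos hq (Real.tan_pos_of_pos_of_lt_pi_div_two h1 h2)
  · intro hy
    refine ⟨Real.arctan (y/q), ⟨by simpa using Real.arctan_strictMono (div_pos hy hq),
      Real.arctan_lt_pi_div_two _⟩, ?_⟩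
    rw [Real.tan_arctan]
    field_simp

lemma lemA (p q : ℝ) (hp : 0 < p) (hq : 0 < q) :
    ∫ θ in (0:ℝ)..(π/2), 1 / Real.sqrt (p ^ 2 * Real.cos θ ^ 2 + q ^ 2 * Real.sin θ ^ 2) =
    ∫ x in Ioi (0:ℝ), 1 / Real.sqrt ((x ^ 2 + p ^ 2) * (x ^ 2 + q ^ 2)) := by
  have hsub : Ioo (0:ℝ) (π/2) ⊆ Ioo (-(π/2)) (π/2) := by
    apply Ioo_subset_Ioo _ le_rfl
    linarith [pi_pos]
  have htanInj : InjOn Real.tan (Ioo (0:ℝ) (π/2)) :=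
    (Real.strictMonoOn_tan.mono hsub).injOn
  have hInj : InjOn (fun θ => q * Real.tan θ) (Ioo (0:ℝ) (π/2)) := by
    intro x hx y hy h
    exact htanInj hx hy (mul_left_cancel₀ hq.ne' h)
  have hder : ∀ θ ∈ Ioo (0:ℝ) (π/2),
      HasDerivWithinAt (fun θ => q * Real.tan θ) (q / Real.cos θ ^ 2) (Ioo (0:ℝ) (π/2)) θ := by
    intro θ hθ
    have hcos : Real.cos θ ≠ 0 := by
      have := Real.cos_pos_of_mem_Ioo (hsub hθ)
      positivity
    have := (Real.hasDerivAt_tan hcos).const_mul q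
    simpa [mul_one_div, div_eq_mul_inv] using this.hasDerivWithinAt
  have key := integral_image_eq_integral_abs_deriv_smul measurableSet_Ioo hder hInj
    (fun x => 1 / Real.sqrt ((x ^ 2 + p ^ 2) * (x ^ 2 + q ^ 2)))
  rw [tan_image q hq] at key
  rw [intervalIntegral.integral_of_le (by positivity), key,
    ← MeasureTheory.Measure.restrict_congr_set Ioo_ae_eq_Ioc]
  apply MeasureTheory.setIntegral_congr_fun measurableSet_Ioo
  intro θ hθ
  have hcos : 0 < Real.cos θ := Real.cos_pos_of_mem_Ioo (hsub hθ)
  have htan : Real.tan θ = Real.sin θ / Real.cos θ := Real.tan_eq_sin_div_cos θ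
  have hden := pos_den p q hp hq θ
  simp only [smul_eq_mul]
  rw [abs_of_pos (by positivity), htan]
  have h1 : ((q * (Real.sin θ / Real.cos θ)) ^ 2 + p ^ 2) *
      ((q * (Real.sin θ / Real.cos θ)) ^ 2 + q ^ 2) =
      (q ^ 2 * (p ^ 2 * Real.cos θ ^ 2 + q ^ 2 * Real.sin θ ^ 2)) / Real.cos θ ^ 4 := by
    have hs2 : Real.sin θ ^ 2 = 1 - Real.cos θ ^ 2 := by
      nlinarith [Real.sin_sq_add_cos_sq θ]
    field_simp
    linear_combination (q ^ 2 * Real.sin θ ^ 2 + Real.cos θ ^ 2 * p ^ 2) * Real.sin_sq_add_cos_sq θ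
  rw [h1, show q ^ 2 * (p ^ 2 * Real.cos θ ^ 2 + q ^ 2 * Real.sin θ ^ 2) / Real.cos θ ^ 4
      = (q / Real.cos θ ^ 2) ^ 2 * (p ^ 2 * Real.cos θ ^ 2 + q ^ 2 * Real.sin θ ^ 2) by ring,
    Real.sqrt_mul (sq_nonneg _), Real.sqrt_sq (by positivity : (0:ℝ) ≤ q / Real.cos θ ^ 2)]
  have hsd : Real.sqrt (p ^ 2 * Real.cos θ ^ 2 + q ^ 2 * Real.sin θ ^ 2) ≠ 0 :=
    ne_of_gt (Real.sqrt_pos.2 hden)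
  field_simp

lemma lemInt (p q : ℝ) (hp : 0 < p) (hq : 0 < q) :
    IntegrableOn (fun x => 1 / Real.sqrt ((x ^ 2 + p ^ 2) * (x ^ 2 + q ^ 2))) (Ioi (0:ℝ)) := by
  have hsub : Ioo (0:ℝ) (π/2) ⊆ Ioo (-(π/2)) (π/2) := by
    apply Ioo_subset_Ioo _ le_rfl
    linarith [pi_pos]
  have htanInj : InjOn Real.tan (Ioo (0:ℝ) (π/2)) :=
    (Real.strictMonoOn_tan.mono hsub).injOn
  have hInj : InjOn (fun θ => q * Real.tan θ) (Ioo (0:ℝ) (π/2)) := by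
    intro x hx y hy h
    exact htanInj hx hy (mul_left_cancel₀ hq.ne' h)
  have hder : ∀ θ ∈ Ioo (0:ℝ) (π/2),
      HasDerivWithinAt (fun θ => q * Real.tan θ) (q / Real.cos θ ^ 2) (Ioo (0:ℝ) (π/2)) θ := by
    intro θ hθ
    have hcos : Real.cos θ ≠ 0 := by
      have := Real.cos_pos_of_mem_Ioo (hsub hθ)
      positivity
    have := (Real.hasDerivAt_tan hcos).const_mul q
    simpa [mul_one_div, div_eq_mul_inv] using this.hasDerivWithinAt
  have key := (integrableOn_image_iff_integrableOn_abs_deriv_smul measurableSet_Ioo hder hInj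
    (fun x => 1 / Real.sqrt ((x ^ 2 + p ^ 2) * (x ^ 2 + q ^ 2))))
  rw [tan_image q hq] at key
  rw [key]
  apply IntegrableOn.congr_fun (f := fun θ =>
      1 / Real.sqrt (p ^ 2 * Real.cos θ ^ 2 + q ^ 2 * Real.sin θ ^ 2)) _ _ measurableSet_Ioo
  · exact ((cont_den p q hp hq).integrableOn_Ioc).mono_set Ioo_subset_Ioc_self
  · intro θ hθ
    have hcos : 0 < Real.cos θ := Real.cos_pos_of_mem_Ioo (hsub hθ)
    have htan : Real.tan θ = Real.sin θ / Real.cos θ := Real.tan_eq_sin_div_cos θ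
    have hden := pos_den p q hp hq θ
    simp only [smul_eq_mul]
    rw [abs_of_pos (by positivity), htan]
    have h1 : ((q * (Real.sin θ / Real.cos θ)) ^ 2 + p ^ 2) *
        ((q * (Real.sin θ / Real.cos θ)) ^ 2 + q ^ 2) =
        (q ^ 2 * (p ^ 2 * Real.cos θ ^ 2 + q ^ 2 * Real.sin θ ^ 2)) / Real.cos θ ^ 4 := by
      field_simp
      linear_combination (q ^ 2 * Real.sin θ ^ 2 + Real.cos θ ^ 2 * p ^ 2) * Real.sin_sq_add_cos_sq θ
    rw [h1, show q ^ 2 * (p ^ 2 * Real.cos θ ^ 2 + q ^ 2 * Real.sin θ ^ 2) / Real.cos θ ^ 4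
        = (q / Real.cos θ ^ 2) ^ 2 * (p ^ 2 * Real.cos θ ^ 2 + q ^ 2 * Real.sin θ ^ 2) by ring,
      Real.sqrt_mul (sq_nonneg _), Real.sqrt_sq (by positivity : (0:ℝ) ≤ q / Real.cos θ ^ 2)]
    have hsd : Real.sqrt (p ^ 2 * Real.cos θ ^ 2 + q ^ 2 * Real.sin θ ^ 2) ≠ 0 :=
      ne_of_gt (Real.sqrt_pos.2 hden)
    field_simp

section agmsub
variable (a b : ℝ)

lemma agm_img1 (hb : 0 < b) (hab : b < a) :
    (fun x => (x - a*b/x)/2) '' Ioi (Real.sqrt (a*b)) = Ioi 0 := by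
  have hab0 : (0:ℝ) < a * b := mul_pos (hb.trans hab) hb
  ext u
  simp only [mem_image, mem_Ioi]
  constructor
  · rintro ⟨x, hx, rfl⟩
    have hx0 : 0 < x := lt_trans (Real.sqrt_pos.2 hab0) hx
    have hx2 : a * b < x ^ 2 := by
      have := (Real.sqrt_lt' hx0).1 hx
      linarith
    have : a*b/x < x := by
      rw [div_lt_iff₀ hx0]; nlinarith
    linarith
  · intro hu
    refine ⟨u + Real.sqrt (u^2 + a*b), ?_, ?_⟩
    · have h1 : Real.sqrt (a*b) < Real.sqrt (u^2 + a*b) :=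
        Real.sqrt_lt_sqrt (le_of_lt hab0) (by nlinarith)
      linarith
    · have hs : Real.sqrt (u^2 + a*b) ^ 2 = u^2 + a*b := Real.sq_sqrt (by positivity)
      have hxpos : 0 < u + Real.sqrt (u^2 + a*b) := by
        have := Real.sqrt_nonneg (u^2 + a*b); linarith
      field_simp
      linear_combination hs

lemma agm_img2 (hb : 0 < b) (hab : b < a) :
    (fun x => (x - a*b/x)/2) '' Ioo 0 (Real.sqrt (a*b)) = Iio 0 := by
  have hab0 : (0:ℝ) < a * b := mul_pos (hb.trans hab) hb
  ext u
  simp only [mem_image, mem_Ioo, mem_Iio]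
  constructor
  · rintro ⟨x, ⟨hx0, hx⟩, rfl⟩
    have hx2 : x ^ 2 < a * b := by
      have := (Real.lt_sqrt (le_of_lt hx0)).1 hx
      linarith
    have : x < a*b/x := by
      rw [lt_div_iff₀ hx0]; nlinarith
    linarith
  · intro hu
    have habs : -u < Real.sqrt (u^2 + a*b) := by
      rw [Real.lt_sqrt (by linarith)]
      nlinarith
    have hxpos : 0 < u + Real.sqrt (u^2 + a*b) := by linarith
    refine ⟨u + Real.sqrt (u^2 + a*b), ⟨hxpos, ?_⟩, ?_⟩
    · have h1 : Real.sqrt (u^2 + a*b) < Real.sqrt (a*b) - u := by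
        rw [Real.sqrt_lt' (by nlinarith [Real.sqrt_pos.2 hab0])]
        have := Real.sq_sqrt (le_of_lt hab0)
        nlinarith [Real.sqrt_pos.2 hab0]
      linarith
    · have hs : Real.sqrt (u^2 + a*b) ^ 2 = u^2 + a*b := Real.sq_sqrt (by positivity)
      field_simp
      linear_combination hs

lemma agm_inj (hb : 0 < b) (hab : b < a) (s : Set ℝ) (hs : s ⊆ Ioi 0) :
    InjOn (fun x => (x - a*b/x)/2) s := by
  have hab0 : (0:ℝ) < a * b := mul_pos (hb.trans hab) hb
  intro x hx y hy h
  have hx0 : 0 < x := hs hx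
  have hy0 : 0 < y := hs hy
  have h2 : (x - y) * (x*y + a*b) = 0 := by
    field_simp at h
    nlinarith [h]
  rcases mul_eq_zero.1 h2 with h3 | h3
  · linarith
  · nlinarith

lemma agm_der (hb : 0 < b) (hab : b < a) (s : Set ℝ) (hs : s ⊆ Ioi 0) :
    ∀ x ∈ s, HasDerivWithinAt (fun x => (x - a*b/x)/2)
      ((1 + a*b/x^2)/2) s x := by
  intro x hx
  have hx0 : x ≠ 0 := ne_of_gt (hs hx)
  have h1 : HasDerivAt (fun x : ℝ => (x - a*b/x)/2) ((1 - a*b * (-(x^2)⁻¹))/2) x := by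
    have := ((hasDerivAt_id x).sub (((hasDerivAt_inv hx0)).const_mul (a*b))).div_const 2
    simpa [div_eq_mul_inv] using this
  have h2 : (1 - a*b * (-(x^2)⁻¹))/2 = (1 + a*b/x^2)/2 := by
    field_simp
    ring
  rw [h2] at h1
  exact h1.hasDerivWithinAt
end agmsub

lemma agm_pointwise (a b : ℝ) (hb : 0 < b) (hab : b < a) (x : ℝ) (hx : 0 < x) :
    |(1 + a*b/x^2)/2| * (1 / Real.sqrt ((((x - a*b/x)/2) ^ 2 + ((a+b)/2) ^ 2) *
        (((x - a*b/x)/2) ^ 2 + a*b))) =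
    2 * (1 / Real.sqrt ((x ^ 2 + a ^ 2) * (x ^ 2 + b ^ 2))) := by
  have hab0 : (0:ℝ) < a * b := mul_pos (hb.trans hab) hb
  have hx0 : x ≠ 0 := ne_of_gt hx
  have hkey : (((x - a*b/x)/2) ^ 2 + ((a+b)/2) ^ 2) * (((x - a*b/x)/2) ^ 2 + a*b)
      = ((x^2 + a*b)/(4*x^2)) ^ 2 * ((x ^ 2 + a ^ 2) * (x ^ 2 + b ^ 2)) := by
    field_simp
    ring
  have hc : (0:ℝ) < (x^2 + a*b)/(4*x^2) := by positivity
  rw [hkey, Real.sqrt_mul (sq_nonneg _), Real.sqrt_sq (le_of_lt hc),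
    abs_of_pos (by positivity)]
  have hR : (0:ℝ) < Real.sqrt ((x ^ 2 + a ^ 2) * (x ^ 2 + b ^ 2)) :=
    Real.sqrt_pos.2 (by positivity)
  have hne : (x^2 + a*b) ≠ 0 := by positivity
  field_simp
  ring

theorem gauss_agm_invariance (a b : ℝ) (hb : 0 < b) (hab : b < a) :
    ∫ θ in (0:ℝ)..(π / 2),
        1 / Real.sqrt (a ^ 2 * Real.cos θ ^ 2 + b ^ 2 * Real.sin θ ^ 2) =
      ∫ θ in (0:ℝ)..(π / 2),
        1 / Real.sqrt (((a + b) / 2) ^ 2 * Real.cos θ ^ 2 +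
          Real.sqrt (a * b) ^ 2 * Real.sin θ ^ 2) := by
  have hab0 : (0:ℝ) < a * b := mul_pos (hb.trans hab) hb
  have hg0pos : 0 < Real.sqrt (a*b) := Real.sqrt_pos.2 hab0
  have hg0sq : Real.sqrt (a*b) ^ 2 = a * b := Real.sq_sqrt (le_of_lt hab0)
  rw [lemA a b (hb.trans hab) hb, lemA ((a+b)/2) (Real.sqrt (a*b)) (by linarith) hg0pos]
  simp only [hg0sq]
  set g0 := Real.sqrt (a*b) with hg0def
  set h0 : ℝ → ℝ := fun x => 1 / Real.sqrt ((x ^ 2 + a ^ 2) * (x ^ 2 + b ^ 2)) with hh0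
  set h : ℝ → ℝ := fun u => 1 / Real.sqrt ((u ^ 2 + ((a+b)/2) ^ 2) * (u ^ 2 + a*b)) with hh
  have hsub1s : Ioi g0 ⊆ Ioi (0:ℝ) := Ioi_subset_Ioi (le_of_lt hg0pos)
  have hsub2s : Ioo (0:ℝ) g0 ⊆ Ioi (0:ℝ) := Ioo_subset_Ioi_self
  have sub1 : ∫ u in Ioi (0:ℝ), h u = ∫ x in Ioi g0, 2 * h0 x := by
    have key := integral_image_eq_integral_abs_deriv_smul measurableSet_Ioi
      (agm_der a b hb hab (Ioi g0) hsub1s) (agm_inj a b hb hab (Ioi g0) hsub1s) h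
    rw [agm_img1 a b hb hab] at key
    rw [key]
    apply setIntegral_congr_fun measurableSet_Ioi
    intro x hx
    have hx0 : 0 < x := lt_trans hg0pos hx
    simpa [hh, hh0, smul_eq_mul] using agm_pointwise a b hb hab x hx0
  have sub2 : ∫ u in Iio (0:ℝ), h u = ∫ x in Ioo (0:ℝ) g0, 2 * h0 x := by
    have key := integral_image_eq_integral_abs_deriv_smul measurableSet_Ioo
      (agm_der a b hb hab (Ioo 0 g0) hsub2s) (agm_inj a b hb hab (Ioo 0 g0) hsub2s) h
    rw [agm_img2 a b hb hab] at key
    rw [key]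
    apply setIntegral_congr_fun measurableSet_Ioo
    intro x hx
    simpa [hh, hh0, smul_eq_mul] using agm_pointwise a b hb hab x hx.1
  have heven : ∫ u in Iio (0:ℝ), h u = ∫ u in Ioi (0:ℝ), h u := by
    have h1 := integral_comp_neg_Ioi (c := (0:ℝ)) h
    simp only [hh, neg_sq, neg_zero] at h1 ⊢
    rw [MeasureTheory.Measure.restrict_congr_set Iio_ae_eq_Iic, ← h1]
  have hint := lemInt a b (hb.trans hab) hb
  have hsplit : ∫ x in Ioi (0:ℝ), h0 x =
      (∫ x in Ioc (0:ℝ) g0, h0 x) + ∫ x in Ioi g0, h0 x := by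
    rw [← Set.Ioc_union_Ioi_eq_Ioi (le_of_lt hg0pos)]
    exact MeasureTheory.setIntegral_union (Set.Ioc_disjoint_Ioi le_rfl) measurableSet_Ioi
      (hint.mono_set (Set.Ioc_subset_Ioi_self)) (hint.mono_set hsub1s)
  have hIocIoo : ∫ x in Ioc (0:ℝ) g0, h0 x = ∫ x in Ioo (0:ℝ) g0, h0 x := by
    rw [← MeasureTheory.Measure.restrict_congr_set Ioo_ae_eq_Ioc]
  have e1 : ∫ x in Ioi g0, 2 * h0 x = 2 * ∫ x in Ioi g0, h0 x :=
    MeasureTheory.integral_const_mul 2 _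
  have e2 : ∫ x in Ioo (0:ℝ) g0, 2 * h0 x = 2 * ∫ x in Ioo (0:ℝ) g0, h0 x :=
    MeasureTheory.integral_const_mul 2 _
  have final : 2 * ∫ u in Ioi (0:ℝ), h u = 2 * ∫ x in Ioi (0:ℝ), h0 x := by
    rw [hsplit, hIocIoo]
    rw [sub1] at *
    linarith [sub2, heven, e1, e2, sub1]
  linarith
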